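/- Let p, q be coprime positive integers, let x₀, y₀ be nonzero reals, φₓ, φ_y reals, and set φ₀ = (qφₓ − pφ_y)/π. For the Type II formation with N = 2 deputy satellites, the no-collision condition B holds if and only if φ₀ is not an integer. -/

import Mathlib

open Real Finset

private lemma sin_half_step (a c : ℝ) :
    Real.sin (2 * π * (a + 1 / 2) + c) = Real.sin (2 * π * (a + 2 / 2) + c) ↔
      Real.sin (2 * π * a + c) = 0 := by
  have h1 : 2 * π * (a + 1 / 2) + c = (2 * π * a + c) + π := by ring
  have h2 : 2 * π * (a + 2 / 2) + c = (2 * π * a + c) + 2 * π := by ring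
  rw [h1, h2, Real.sin_add_pi, Real.sin_add_two_pi]
  constructor
  · intro h; linarith
  · intro h; rw [h]; ring

/-- For a Type II formation of `N = 2` deputy satellites with coprime positive
frequencies `p, q` and nonzero amplitudes, the no-collision condition B holds
iff `φ₀ = (q·φx - p·φy)/π` is not an integer. -/
theorem typeII_noCollision_two_iff (p q : ℕ) (hp : 0 < p) (hq : 0 < q)
    (hpq : Nat.Coprime p q) (x₀ y₀ φx φy φ₀ : ℝ) (hx₀ : x₀ ≠ 0) (hy₀ : y₀ ≠ 0)
    (hφ₀ : φ₀ = ((q : ℝ) * φx - (p : ℝ) * φy) / π) :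
    (∀ τ : ℝ, ∀ i ∈ Finset.Icc (1:ℕ) 2, ∀ j ∈ Finset.Icc (1:ℕ) 2, i ≠ j →
        (x₀ * Real.sin (2 * π * ((p : ℝ) * τ + (i : ℝ) / 2) + φx),
         y₀ * Real.sin (2 * π * ((q : ℝ) * τ + (i : ℝ) / 2) + φy)) ≠
        (x₀ * Real.sin (2 * π * ((p : ℝ) * τ + (j : ℝ) / 2) + φx),
         y₀ * Real.sin (2 * π * ((q : ℝ) * τ + (j : ℝ) / 2) + φy))) ↔
    ¬ ∃ m : ℤ, φ₀ = (m : ℝ) := by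
  have hπ : (π : ℝ) ≠ 0 := Real.pi_ne_zero
  have hpR : ((p : ℝ)) ≠ 0 := by positivity
  have hφ : (q : ℝ) * φx - (p : ℝ) * φy = φ₀ * π := by
    rw [hφ₀]; field_simp
  constructor
  · -- no collision → φ₀ not integer
    rintro h ⟨m, hm⟩
    obtain ⟨u, v, huv⟩ : IsCoprime (p : ℤ) (q : ℤ) :=
      Int.isCoprime_iff_gcd_eq_one.mpr (by exact_mod_cast hpq)
    set k : ℤ := m * v with hk
    set l : ℤ := -(m * u) with hl
    have hkl : (q : ℤ) * k - (p : ℤ) * l = m := by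
      rw [hk, hl]; linear_combination m * huv
    set τ : ℝ := ((k : ℝ) * π - φx) / (2 * π * p) with hτ
    have hX : 2 * π * ((p : ℝ) * τ) + φx = (k : ℝ) * π := by
      rw [hτ]; field_simp; ring
    have hY : 2 * π * ((q : ℝ) * τ) + φy = (l : ℝ) * π := by
      rw [hτ]
      have hklR : (q : ℝ) * (k : ℝ) - (p : ℝ) * (l : ℝ) = (m : ℝ) := by
        exact_mod_cast congrArg (Int.cast : ℤ → ℝ) hkl
      field_simp
      linear_combination π * hklR - hφ - π * hm
    have hsX : Real.sin (2 * π * ((p : ℝ) * τ) + φx) = 0 := by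
      rw [hX]; exact Real.sin_int_mul_pi k
    have hsY : Real.sin (2 * π * ((q : ℝ) * τ) + φy) = 0 := by
      rw [hY]; exact Real.sin_int_mul_pi l
    refine h τ 1 (by decide) 2 (by decide) (by decide) ?_
    have e1 : Real.sin (2 * π * ((p : ℝ) * τ + (1 : ℕ) / 2) + φx) =
        Real.sin (2 * π * ((p : ℝ) * τ + (2 : ℕ) / 2) + φx) := by
      push_cast
      exact (sin_half_step _ _).mpr hsX
    have e2 : Real.sin (2 * π * ((q : ℝ) * τ + (1 : ℕ) / 2) + φy) =
        Real.sin (2 * π * ((q : ℝ) * τ + (2 : ℕ) / 2) + φy) := by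
      push_cast
      exact (sin_half_step _ _).mpr hsY
    rw [e1, e2]
  · -- φ₀ not integer → no collision
    intro h τ i hi j hj hij heq
    rw [Prod.mk.injEq] at heq
    obtain ⟨hx, hy⟩ := heq
    have hx' := mul_left_cancel₀ hx₀ hx
    have hy' := mul_left_cancel₀ hy₀ hy
    have hmain : Real.sin (2 * π * ((p : ℝ) * τ) + φx) = 0 ∧
        Real.sin (2 * π * ((q : ℝ) * τ) + φy) = 0 := by
      simp only [Finset.mem_Icc] at hi hj
      obtain ⟨hi1, hi2⟩ := hi
      obtain ⟨hj1, hj2⟩ := hj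
      interval_cases i <;> interval_cases j <;> push_cast at hx' hy' <;>
        first
          | exact absurd rfl hij
          | exact ⟨(sin_half_step _ _).mp hx', (sin_half_step _ _).mp hy'⟩
          | exact ⟨(sin_half_step _ _).mp hx'.symm, (sin_half_step _ _).mp hy'.symm⟩
    obtain ⟨hsX, hsY⟩ := hmain
    obtain ⟨k, hk⟩ := Real.sin_eq_zero_iff.mp hsX
    obtain ⟨l, hl⟩ := Real.sin_eq_zero_iff.mp hsY
    refine h ⟨(q : ℤ) * k - (p : ℤ) * l, ?_⟩
    have : φ₀ * π = ((q : ℝ) * k - (p : ℝ) * l) * π := by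
      rw [← hφ]; nlinarith [hk, hl]
    have := mul_right_cancel₀ hπ this
    rw [this]; push_cast; ring
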